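/- arXiv:1601.03258 — 2 statements merged into one kernel-verified Lean document; each statement's English description precedes it below -/
import Mathlib

section
/- (Unitarity of the scattering coefficients.) Let q : ℝ → ℂ be continuous, real-valued (q(x) ∈ ℝ for all x), with ∫_ℝ (1+|x|)|q(x)| dx < ∞, and let k be a nonzero real number. Let (c₁, c₂) be the unique complex constants with f₋(k,x) = c₁ f₊(k,x) + c₂ f₊(−k,x) for all x. Then |c₂|² − |c₁|² = 1. -/
open MeasureTheory Filter Set


lemma tail_Iic_tendsto {u : ℝ → ℂ} (hu : Integrable u) :
    Tendsto (fun x : ℝ => ∫ t in Set.Iic x, ‖u t‖) atTop (nhds (∫ t, ‖u t‖)) :=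
  (aecover_Iic (tendsto_id : Tendsto (id : ℝ → ℝ) atTop atTop)).integral_tendsto_of_countably_generated hu.norm

lemma tail_Ici {u : ℝ → ℂ} (hu : Integrable u) :
    Tendsto (fun x : ℝ => ∫ t in Set.Ici x, ‖u t‖) atTop (nhds 0) := by
  have key : ∀ x : ℝ, ∫ t in Set.Ici x, ‖u t‖ = (∫ t, ‖u t‖) - ∫ t in Set.Iic x, ‖u t‖ := by
    intro x
    have h1 : (∫ t in Set.Iic x, ‖u t‖) + ∫ t in Set.Ioi x, ‖u t‖ = ∫ t, ‖u t‖ :=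
      intervalIntegral.integral_Iic_add_Ioi hu.norm.integrableOn hu.norm.integrableOn
    rw [integral_Ici_eq_integral_Ioi]
    linarith
  simp only [key]
  have h3 := Tendsto.const_sub (∫ t, ‖u t‖) (tail_Iic_tendsto hu)
  simpa using h3

lemma tail_Iic {u : ℝ → ℂ} (hu : Integrable u) :
    Tendsto (fun x : ℝ => ∫ t in Set.Iic x, ‖u t‖) atBot (nhds 0) := by
  have key : ∀ x : ℝ, ∫ t in Set.Iic x, ‖u t‖ = (∫ t, ‖u t‖) - ∫ t in Set.Ici x, ‖u t‖ := by
    intro x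
    have h1 : (∫ t in Set.Iic x, ‖u t‖) + ∫ t in Set.Ioi x, ‖u t‖ = ∫ t, ‖u t‖ :=
      intervalIntegral.integral_Iic_add_Ioi hu.norm.integrableOn hu.norm.integrableOn
    rw [integral_Ici_eq_integral_Ioi]
    linarith
  simp only [key]
  have h2 : Tendsto (fun x : ℝ => ∫ t in Set.Ici x, ‖u t‖) atBot (nhds (∫ t, ‖u t‖)) :=
    (aecover_Ici (tendsto_id : Tendsto (id : ℝ → ℝ) atBot atBot)).integral_tendsto_of_countably_generated hu.norm
  have h3 := Tendsto.const_sub (∫ t, ‖u t‖) h2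
  simpa using h3

lemma ftc_Ici {u : ℝ → ℂ} (hc : Continuous u) (hu : Integrable u) (x : ℝ) :
    HasDerivAt (fun y : ℝ => ∫ t in Set.Ici y, u t) (-u x) x := by
  have key : ∀ y : ℝ, ∫ t in Set.Ici y, u t
      = (∫ t, u t) - (∫ t in Set.Iic (0:ℝ), u t) - ∫ t in (0:ℝ)..y, u t := by
    intro y
    have h1 : (∫ t in Set.Iic y, u t) + ∫ t in Set.Ioi y, u t = ∫ t, u t :=
      intervalIntegral.integral_Iic_add_Ioi hu.integrableOn hu.integrableOn
    have h2 : (∫ t in Set.Iic y, u t) - ∫ t in Set.Iic (0:ℝ), u t = ∫ t in (0:ℝ)..y, u t :=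
      intervalIntegral.integral_Iic_sub_Iic hu.integrableOn hu.integrableOn
    rw [integral_Ici_eq_integral_Ioi, ← h1, ← h2]; ring
  have hD : HasDerivAt (fun y : ℝ => ∫ t in (0:ℝ)..y, u t) (u x) x :=
    intervalIntegral.integral_hasDerivAt_right (hu.intervalIntegrable)
      (hc.stronglyMeasurableAtFilter _ _) hc.continuousAt
  have : (fun y : ℝ => ∫ t in Set.Ici y, u t)
      = fun y => (∫ t, u t) - (∫ t in Set.Iic (0:ℝ), u t) - ∫ t in (0:ℝ)..y, u t := funext key
  rw [this]
  exact hD.const_sub _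

lemma ftc_Iic {u : ℝ → ℂ} (hc : Continuous u) (hu : Integrable u) (x : ℝ) :
    HasDerivAt (fun y : ℝ => ∫ t in Set.Iic y, u t) (u x) x := by
  have key : ∀ y : ℝ, ∫ t in Set.Iic y, u t
      = (∫ t in Set.Iic (0:ℝ), u t) + ∫ t in (0:ℝ)..y, u t := by
    intro y
    have h2 : (∫ t in Set.Iic y, u t) - ∫ t in Set.Iic (0:ℝ), u t = ∫ t in (0:ℝ)..y, u t :=
      intervalIntegral.integral_Iic_sub_Iic hu.integrableOn hu.integrableOn
    rw [← h2]; ring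
  have hD : HasDerivAt (fun y : ℝ => ∫ t in (0:ℝ)..y, u t) (u x) x :=
    intervalIntegral.integral_hasDerivAt_right (hu.intervalIntegrable)
      (hc.stronglyMeasurableAtFilter _ _) hc.continuousAt
  have : (fun y : ℝ => ∫ t in Set.Iic y, u t)
      = fun y => (∫ t in Set.Iic (0:ℝ), u t) + ∫ t in (0:ℝ)..y, u t := funext key
  rw [this]
  exact (hD.const_add _)

lemma right_deriv {q : ℝ → ℂ} (hqc : Continuous q) {κ : ℝ} (hκ : κ ≠ 0)
    {f : ℝ → ℂ} (hf : Continuous f)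
    (hui : Integrable (fun t => q t * f t))
    (heq : ∀ x : ℝ, f x = Complex.exp (Complex.I * κ * x) -
        ∫ t in Set.Ici x, ((Real.sin (κ * (x - t)) / κ : ℝ) : ℂ) * q t * f t) :
    ∃ f1 : ℝ → ℂ,
      (∀ x, HasDerivAt f (f1 x) x) ∧
      (∀ x, HasDerivAt f1 ((q x - (κ:ℂ)^2) * f x) x) ∧
      Tendsto (fun x => f x - Complex.exp (Complex.I * κ * x)) atTop (nhds 0) ∧
      Tendsto (fun x => f1 x - Complex.I * κ * Complex.exp (Complex.I * κ * x)) atTop (nhds 0) := by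
  have hκC : (κ:ℂ) ≠ 0 := by exact_mod_cast hκ
  set u : ℝ → ℂ := fun t => q t * f t with hu
  have huc : Continuous u := hqc.mul hf
  have hcosc : Continuous fun t : ℝ => ((Real.cos (κ * t) : ℝ) : ℂ) :=
    Complex.continuous_ofReal.comp (Real.continuous_cos.comp (continuous_const.mul continuous_id))
  have hsinc : Continuous fun t : ℝ => ((Real.sin (κ * t) : ℝ) : ℂ) :=
    Complex.continuous_ofReal.comp (Real.continuous_sin.comp (continuous_const.mul continuous_id))
  have hPi : Integrable fun t : ℝ => ((Real.cos (κ * t) : ℝ) : ℂ) * u t :=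
    hui.bdd_mul hcosc.aestronglyMeasurable
      (c := 1) (ae_of_all _ fun t => by rw [Complex.norm_real]; exact Real.abs_cos_le_one _)
  have hQi : Integrable fun t : ℝ => ((Real.sin (κ * t) : ℝ) : ℂ) * u t :=
    hui.bdd_mul hsinc.aestronglyMeasurable
      (c := 1) (ae_of_all _ fun t => by rw [Complex.norm_real]; exact Real.abs_sin_le_one _)
  set P : ℝ → ℂ := fun x => ∫ t in Set.Ici x, ((Real.cos (κ * t) : ℝ) : ℂ) * u t with hP
  set Q : ℝ → ℂ := fun x => ∫ t in Set.Ici x, ((Real.sin (κ * t) : ℝ) : ℂ) * u t with hQ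
  have hGeq : ∀ x : ℝ, (∫ t in Set.Ici x, ((Real.sin (κ * (x - t)) / κ : ℝ) : ℂ) * q t * f t)
      = ((Real.sin (κ * x) / κ : ℝ) : ℂ) * P x - ((Real.cos (κ * x) / κ : ℝ) : ℂ) * Q x := by
    intro x
    simp only [hP, hQ]
    rw [← integral_const_mul, ← integral_const_mul,
      ← integral_sub ((hPi.const_mul _).integrableOn) ((hQi.const_mul _).integrableOn)]
    congr 1; funext t
    simp only [hu]
    push_cast
    rw [mul_sub, Complex.sin_sub]
    field_simp
  have hfeq : ∀ x : ℝ, f x = Complex.exp (Complex.I * κ * x)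
      - (((Real.sin (κ * x) / κ : ℝ) : ℂ) * P x - ((Real.cos (κ * x) / κ : ℝ) : ℂ) * Q x) :=
    fun x => by rw [heq x, hGeq x]
  -- derivatives of P and Q
  have hP' : ∀ x : ℝ, HasDerivAt P (-(((Real.cos (κ * x) : ℝ) : ℂ) * u x)) x :=
    fun x => ftc_Ici (hcosc.mul huc) hPi x
  have hQ' : ∀ x : ℝ, HasDerivAt Q (-(((Real.sin (κ * x) : ℝ) : ℂ) * u x)) x :=
    fun x => ftc_Ici (hsinc.mul huc) hQi x
  -- derivative of trig coefficients
  have hlin : ∀ x : ℝ, HasDerivAt (fun y : ℝ => κ * y) κ x := by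
    intro x; simpa using (hasDerivAt_id x).const_mul κ
  have hsinD : ∀ x : ℝ, HasDerivAt (fun y : ℝ => ((Real.sin (κ * y) : ℝ) : ℂ))
      (((Real.cos (κ * x) * κ : ℝ) : ℂ)) x :=
    fun x => (((Real.hasDerivAt_sin (κ * x)).comp x (hlin x))).ofReal_comp
  have hcosD : ∀ x : ℝ, HasDerivAt (fun y : ℝ => ((Real.cos (κ * y) : ℝ) : ℂ))
      (((-Real.sin (κ * x) * κ : ℝ) : ℂ)) x :=
    fun x => (((Real.hasDerivAt_cos (κ * x)).comp x (hlin x))).ofReal_comp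
  have hsinDk : ∀ x : ℝ, HasDerivAt (fun y : ℝ => ((Real.sin (κ * y) / κ : ℝ) : ℂ))
      (((Real.cos (κ * x) * κ / κ : ℝ) : ℂ)) x :=
    fun x => (((Real.hasDerivAt_sin (κ * x)).comp x (hlin x)).div_const κ).ofReal_comp
  have hcosDk : ∀ x : ℝ, HasDerivAt (fun y : ℝ => ((Real.cos (κ * y) / κ : ℝ) : ℂ))
      (((-Real.sin (κ * x) * κ / κ : ℝ) : ℂ)) x :=
    fun x => (((Real.hasDerivAt_cos (κ * x)).comp x (hlin x)).div_const κ).ofReal_comp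
  have hexpD : ∀ x : ℝ, HasDerivAt (fun y : ℝ => Complex.exp (Complex.I * κ * y))
      (Complex.I * κ * Complex.exp (Complex.I * κ * x)) x := by
    intro x
    have h1 := ((hasDerivAt_id (x:ℂ)).const_mul (Complex.I * κ)).cexp
    have h2 := h1.comp_ofReal
    convert h2 using 1
    · rfl
    simp only [id_eq]
    ring
  set f1 : ℝ → ℂ := fun x => Complex.I * κ * Complex.exp (Complex.I * κ * x)
      - (((Real.cos (κ * x) : ℝ) : ℂ) * P x + ((Real.sin (κ * x) : ℝ) : ℂ) * Q x) with hf1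
  have hfD : ∀ x : ℝ, HasDerivAt f (f1 x) x := by
    intro x
    have h1 := ((hsinDk x).mul (hP' x)).sub ((hcosDk x).mul (hQ' x))
    have h2 := (hexpD x).sub h1
    have hfun : f = fun y : ℝ => Complex.exp (Complex.I * κ * y)
        - (((Real.sin (κ * y) / κ : ℝ) : ℂ) * P y - ((Real.cos (κ * y) / κ : ℝ) : ℂ) * Q y) :=
      funext hfeq
    rw [hfun]
    convert h2 using 1
    · rfl
    · rfl
    rw [hf1]
    push_cast
    field_simp
    ring
  have hf1D : ∀ x : ℝ, HasDerivAt f1 ((q x - (κ:ℂ)^2) * f x) x := by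
    intro x
    have h1 := ((hcosD x).mul (hP' x)).add ((hsinD x).mul (hQ' x))
    have h2' := (hexpD x).const_mul (Complex.I * κ)
    have h2 := h2'.sub h1
    rw [hf1]
    convert h2 using 1
    · rfl
    · rfl
    have hpyth : ((Real.cos (κ * x) : ℝ) : ℂ)^2 + ((Real.sin (κ * x) : ℝ) : ℂ)^2 = 1 := by
      norm_cast
      exact Real.cos_sq_add_sin_sq _
    have h3 := hfeq x
    push_cast at h3 hpyth
    have h3' : Complex.sin (↑κ*↑x) * P x - Complex.cos (↑κ*↑x) * Q x
        = (κ:ℂ) * Complex.exp (Complex.I*↑κ*↑x) - (κ:ℂ) * f x := by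
      rw [h3]; field_simp; ring
    rw [hu]
    push_cast
    linear_combination (-(κ:ℂ)) * h3' - (q x * f x) * hpyth - (κ:ℂ)^2 * Complex.exp (Complex.I * ↑κ * ↑x) * Complex.I_sq
  -- tail bounds
  have hkerb : ∀ x t : ℝ, ‖((Real.sin (κ * (x - t)) / κ : ℝ) : ℂ)‖ ≤ 1/|κ| := by
    intro x t
    rw [Complex.norm_real, Real.norm_eq_abs, abs_div]
    exact (div_le_div_iff_of_pos_right (abs_pos.mpr hκ)).mpr (Real.abs_sin_le_one _)
  have hker : ∀ x : ℝ, Integrable (fun t => ((Real.sin (κ * (x - t)) / κ : ℝ) : ℂ) * q t * f t) := by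
    intro x
    have hc : Continuous fun t : ℝ => ((Real.sin (κ * (x - t)) / κ : ℝ) : ℂ) :=
      Complex.continuous_ofReal.comp
        ((Real.continuous_sin.comp (continuous_const.mul (continuous_const.sub continuous_id))).div_const κ)
    have h := hui.bdd_mul hc.aestronglyMeasurable (ae_of_all _ fun t => hkerb x t)
    exact h.congr (ae_of_all _ fun t => (mul_assoc _ _ _).symm)
  have hbound1 : ∀ x : ℝ, ‖f x - Complex.exp (Complex.I * κ * x)‖
      ≤ (1/|κ|) * ∫ t in Set.Ici x, ‖u t‖ := by
    intro x
    have h0 : f x - Complex.exp (Complex.I * κ * x)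
        = -(∫ t in Set.Ici x, ((Real.sin (κ * (x - t)) / κ : ℝ) : ℂ) * q t * f t) := by
      rw [heq x]; ring
    rw [h0, norm_neg]
    calc ‖∫ t in Set.Ici x, ((Real.sin (κ * (x - t)) / κ : ℝ) : ℂ) * q t * f t‖
        ≤ ∫ t in Set.Ici x, ‖((Real.sin (κ * (x - t)) / κ : ℝ) : ℂ) * q t * f t‖ :=
          norm_integral_le_integral_norm _
      _ ≤ ∫ t in Set.Ici x, (1/|κ|) * ‖u t‖ := by
          refine setIntegral_mono_on ((hker x).norm.integrableOn)
            ((hui.norm.const_mul _).integrableOn) measurableSet_Ici ?_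
          intro t _
          calc ‖((Real.sin (κ * (x - t)) / κ : ℝ) : ℂ) * q t * f t‖
              = ‖((Real.sin (κ * (x - t)) / κ : ℝ) : ℂ)‖ * ‖q t * f t‖ := by
                rw [mul_assoc, norm_mul]
            _ ≤ (1/|κ|) * ‖u t‖ := mul_le_mul_of_nonneg_right (hkerb x t) (norm_nonneg _)
      _ = (1/|κ|) * ∫ t in Set.Ici x, ‖u t‖ := integral_const_mul _ _
  have h3 : Tendsto (fun x => f x - Complex.exp (Complex.I * κ * x)) atTop (nhds 0) := by
    have hg := (tail_Ici hui).const_mul (1/|κ|)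
    rw [mul_zero] at hg
    exact squeeze_zero_norm hbound1 hg
  have hPb : ∀ x : ℝ, ‖P x‖ ≤ ∫ t in Set.Ici x, ‖u t‖ := by
    intro x
    refine (norm_integral_le_integral_norm _).trans ?_
    refine setIntegral_mono_on (hPi.norm.integrableOn) (hui.norm.integrableOn)
      measurableSet_Ici fun t _ => ?_
    rw [norm_mul, Complex.norm_real, Real.norm_eq_abs]
    exact mul_le_of_le_one_left (norm_nonneg _) (Real.abs_cos_le_one _)
  have hQb : ∀ x : ℝ, ‖Q x‖ ≤ ∫ t in Set.Ici x, ‖u t‖ := by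
    intro x
    refine (norm_integral_le_integral_norm _).trans ?_
    refine setIntegral_mono_on (hQi.norm.integrableOn) (hui.norm.integrableOn)
      measurableSet_Ici fun t _ => ?_
    rw [norm_mul, Complex.norm_real, Real.norm_eq_abs]
    exact mul_le_of_le_one_left (norm_nonneg _) (Real.abs_sin_le_one _)
  have hbound2 : ∀ x : ℝ, ‖f1 x - Complex.I * κ * Complex.exp (Complex.I * κ * x)‖
      ≤ 2 * ∫ t in Set.Ici x, ‖u t‖ := by
    intro x
    have h0 : f1 x - Complex.I * κ * Complex.exp (Complex.I * κ * x)
        = -(((Real.cos (κ * x):ℝ):ℂ) * P x + ((Real.sin (κ * x):ℝ):ℂ) * Q x) := by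
      rw [hf1]; ring
    rw [h0, norm_neg]
    calc ‖((Real.cos (κ * x):ℝ):ℂ) * P x + ((Real.sin (κ * x):ℝ):ℂ) * Q x‖
        ≤ ‖((Real.cos (κ * x):ℝ):ℂ) * P x‖ + ‖((Real.sin (κ * x):ℝ):ℂ) * Q x‖ := norm_add_le _ _
      _ ≤ ‖P x‖ + ‖Q x‖ := by
          rw [norm_mul, norm_mul, Complex.norm_real, Complex.norm_real, Real.norm_eq_abs,
            Real.norm_eq_abs]
          exact add_le_add (mul_le_of_le_one_left (norm_nonneg _) (Real.abs_cos_le_one _))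
            (mul_le_of_le_one_left (norm_nonneg _) (Real.abs_sin_le_one _))
      _ ≤ (∫ t in Set.Ici x, ‖u t‖) + ∫ t in Set.Ici x, ‖u t‖ := add_le_add (hPb x) (hQb x)
      _ = 2 * ∫ t in Set.Ici x, ‖u t‖ := by ring
  have h4 : Tendsto (fun x => f1 x - Complex.I * κ * Complex.exp (Complex.I * κ * x))
      atTop (nhds 0) := by
    have hg := (tail_Ici hui).const_mul (2:ℝ)
    rw [mul_zero] at hg
    exact squeeze_zero_norm hbound2 hg
  exact ⟨f1, hfD, hf1D, h3, h4⟩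

lemma left_deriv {q : ℝ → ℂ} (hqc : Continuous q) {κ : ℝ} (hκ : κ ≠ 0)
    {f : ℝ → ℂ} (hf : Continuous f)
    (hui : Integrable (fun t => q t * f t))
    (heq : ∀ x : ℝ, f x = Complex.exp (-(Complex.I * κ * x)) +
        ∫ t in Set.Iic x, ((Real.sin (κ * (x - t)) / κ : ℝ) : ℂ) * q t * f t) :
    ∃ f1 : ℝ → ℂ,
      (∀ x, HasDerivAt f (f1 x) x) ∧
      (∀ x, HasDerivAt f1 ((q x - (κ:ℂ)^2) * f x) x) ∧
      Tendsto (fun x => f x - Complex.exp (-(Complex.I * κ * x))) atBot (nhds 0) ∧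
      Tendsto (fun x => f1 x + Complex.I * κ * Complex.exp (-(Complex.I * κ * x))) atBot (nhds 0) := by
  have hκC : (κ:ℂ) ≠ 0 := by exact_mod_cast hκ
  set u : ℝ → ℂ := fun t => q t * f t with hu
  have huc : Continuous u := hqc.mul hf
  have hcosc : Continuous fun t : ℝ => ((Real.cos (κ * t) : ℝ) : ℂ) :=
    Complex.continuous_ofReal.comp (Real.continuous_cos.comp (continuous_const.mul continuous_id))
  have hsinc : Continuous fun t : ℝ => ((Real.sin (κ * t) : ℝ) : ℂ) :=
    Complex.continuous_ofReal.comp (Real.continuous_sin.comp (continuous_const.mul continuous_id))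
  have hPi : Integrable fun t : ℝ => ((Real.cos (κ * t) : ℝ) : ℂ) * u t :=
    hui.bdd_mul hcosc.aestronglyMeasurable
      (c := 1) (ae_of_all _ fun t => by rw [Complex.norm_real]; exact Real.abs_cos_le_one _)
  have hQi : Integrable fun t : ℝ => ((Real.sin (κ * t) : ℝ) : ℂ) * u t :=
    hui.bdd_mul hsinc.aestronglyMeasurable
      (c := 1) (ae_of_all _ fun t => by rw [Complex.norm_real]; exact Real.abs_sin_le_one _)
  set P : ℝ → ℂ := fun x => ∫ t in Set.Iic x, ((Real.cos (κ * t) : ℝ) : ℂ) * u t with hP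
  set Q : ℝ → ℂ := fun x => ∫ t in Set.Iic x, ((Real.sin (κ * t) : ℝ) : ℂ) * u t with hQ
  have hGeq : ∀ x : ℝ, (∫ t in Set.Iic x, ((Real.sin (κ * (x - t)) / κ : ℝ) : ℂ) * q t * f t)
      = ((Real.sin (κ * x) / κ : ℝ) : ℂ) * P x - ((Real.cos (κ * x) / κ : ℝ) : ℂ) * Q x := by
    intro x
    simp only [hP, hQ]
    rw [← integral_const_mul, ← integral_const_mul,
      ← integral_sub ((hPi.const_mul _).integrableOn) ((hQi.const_mul _).integrableOn)]
    congr 1; funext t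
    simp only [hu]
    push_cast
    rw [mul_sub, Complex.sin_sub]
    field_simp
  have hfeq : ∀ x : ℝ, f x = Complex.exp (-(Complex.I * κ * x))
      + (((Real.sin (κ * x) / κ : ℝ) : ℂ) * P x - ((Real.cos (κ * x) / κ : ℝ) : ℂ) * Q x) :=
    fun x => by rw [heq x, hGeq x]
  have hP' : ∀ x : ℝ, HasDerivAt P (((Real.cos (κ * x) : ℝ) : ℂ) * u x) x :=
    fun x => ftc_Iic (hcosc.mul huc) hPi x
  have hQ' : ∀ x : ℝ, HasDerivAt Q (((Real.sin (κ * x) : ℝ) : ℂ) * u x) x :=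
    fun x => ftc_Iic (hsinc.mul huc) hQi x
  have hlin : ∀ x : ℝ, HasDerivAt (fun y : ℝ => κ * y) κ x := by
    intro x; simpa using (hasDerivAt_id x).const_mul κ
  have hsinD : ∀ x : ℝ, HasDerivAt (fun y : ℝ => ((Real.sin (κ * y) : ℝ) : ℂ))
      (((Real.cos (κ * x) * κ : ℝ) : ℂ)) x :=
    fun x => (((Real.hasDerivAt_sin (κ * x)).comp x (hlin x))).ofReal_comp
  have hcosD : ∀ x : ℝ, HasDerivAt (fun y : ℝ => ((Real.cos (κ * y) : ℝ) : ℂ))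
      (((-Real.sin (κ * x) * κ : ℝ) : ℂ)) x :=
    fun x => (((Real.hasDerivAt_cos (κ * x)).comp x (hlin x))).ofReal_comp
  have hsinDk : ∀ x : ℝ, HasDerivAt (fun y : ℝ => ((Real.sin (κ * y) / κ : ℝ) : ℂ))
      (((Real.cos (κ * x) * κ / κ : ℝ) : ℂ)) x :=
    fun x => (((Real.hasDerivAt_sin (κ * x)).comp x (hlin x)).div_const κ).ofReal_comp
  have hcosDk : ∀ x : ℝ, HasDerivAt (fun y : ℝ => ((Real.cos (κ * y) / κ : ℝ) : ℂ))
      (((-Real.sin (κ * x) * κ / κ : ℝ) : ℂ)) x :=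
    fun x => (((Real.hasDerivAt_cos (κ * x)).comp x (hlin x)).div_const κ).ofReal_comp
  have hexpD : ∀ x : ℝ, HasDerivAt (fun y : ℝ => Complex.exp (-(Complex.I * κ * y)))
      (-(Complex.I * κ) * Complex.exp (-(Complex.I * κ * x))) x := by
    intro x
    have h1 := ((hasDerivAt_id (x:ℂ)).const_mul (-(Complex.I * κ))).cexp
    have h2 := h1.comp_ofReal
    have hfun : (fun y : ℝ => Complex.exp (-(Complex.I * κ * y)))
        = fun y : ℝ => Complex.exp (-(Complex.I * κ) * y) := by
      funext y; congr 1; ring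
    rw [hfun]
    convert h2 using 1
    · rfl
    simp only [id_eq]
    ring_nf
  set f1 : ℝ → ℂ := fun x => -(Complex.I * κ) * Complex.exp (-(Complex.I * κ * x))
      + (((Real.cos (κ * x) : ℝ) : ℂ) * P x + ((Real.sin (κ * x) : ℝ) : ℂ) * Q x) with hf1
  have hfD : ∀ x : ℝ, HasDerivAt f (f1 x) x := by
    intro x
    have h1 := ((hsinDk x).mul (hP' x)).sub ((hcosDk x).mul (hQ' x))
    have h2 := (hexpD x).add h1
    have hfun : f = fun y : ℝ => Complex.exp (-(Complex.I * κ * y))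
        + (((Real.sin (κ * y) / κ : ℝ) : ℂ) * P y - ((Real.cos (κ * y) / κ : ℝ) : ℂ) * Q y) :=
      funext hfeq
    rw [hfun]
    convert h2 using 1
    · rfl
    · rfl
    rw [hf1]
    push_cast
    field_simp
    ring
  have hf1D : ∀ x : ℝ, HasDerivAt f1 ((q x - (κ:ℂ)^2) * f x) x := by
    intro x
    have h1 := ((hcosD x).mul (hP' x)).add ((hsinD x).mul (hQ' x))
    have h2' := (hexpD x).const_mul (-(Complex.I * κ))
    have h2 := h2'.add h1
    rw [hf1]
    convert h2 using 1
    · rfl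
    · rfl
    have hpyth : ((Real.cos (κ * x) : ℝ) : ℂ)^2 + ((Real.sin (κ * x) : ℝ) : ℂ)^2 = 1 := by
      norm_cast
      exact Real.cos_sq_add_sin_sq _
    have h3 := hfeq x
    push_cast at h3 hpyth
    have h3' : Complex.sin (↑κ*↑x) * P x - Complex.cos (↑κ*↑x) * Q x
        = (κ:ℂ) * f x - (κ:ℂ) * Complex.exp (-(Complex.I*↑κ*↑x)) := by
      rw [h3]; field_simp; ring
    rw [hu]
    push_cast
    linear_combination (κ:ℂ) * h3' - (q x * f x) * hpyth - (κ:ℂ)^2 * Complex.exp (-(Complex.I * ↑κ * ↑x)) * Complex.I_sq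
  -- tails
  have hkerb : ∀ x t : ℝ, ‖((Real.sin (κ * (x - t)) / κ : ℝ) : ℂ)‖ ≤ 1/|κ| := by
    intro x t
    rw [Complex.norm_real, Real.norm_eq_abs, abs_div]
    exact (div_le_div_iff_of_pos_right (abs_pos.mpr hκ)).mpr (Real.abs_sin_le_one _)
  have hker : ∀ x : ℝ, Integrable (fun t => ((Real.sin (κ * (x - t)) / κ : ℝ) : ℂ) * q t * f t) := by
    intro x
    have hc : Continuous fun t : ℝ => ((Real.sin (κ * (x - t)) / κ : ℝ) : ℂ) :=
      Complex.continuous_ofReal.comp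
        ((Real.continuous_sin.comp (continuous_const.mul (continuous_const.sub continuous_id))).div_const κ)
    have h := hui.bdd_mul hc.aestronglyMeasurable (ae_of_all _ fun t => hkerb x t)
    exact h.congr (ae_of_all _ fun t => (mul_assoc _ _ _).symm)
  have hbound1 : ∀ x : ℝ, ‖f x - Complex.exp (-(Complex.I * κ * x))‖
      ≤ (1/|κ|) * ∫ t in Set.Iic x, ‖u t‖ := by
    intro x
    have h0 : f x - Complex.exp (-(Complex.I * κ * x))
        = ∫ t in Set.Iic x, ((Real.sin (κ * (x - t)) / κ : ℝ) : ℂ) * q t * f t := by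
      rw [heq x]; ring
    rw [h0]
    calc ‖∫ t in Set.Iic x, ((Real.sin (κ * (x - t)) / κ : ℝ) : ℂ) * q t * f t‖
        ≤ ∫ t in Set.Iic x, ‖((Real.sin (κ * (x - t)) / κ : ℝ) : ℂ) * q t * f t‖ :=
          norm_integral_le_integral_norm _
      _ ≤ ∫ t in Set.Iic x, (1/|κ|) * ‖u t‖ := by
          refine setIntegral_mono_on ((hker x).norm.integrableOn)
            ((hui.norm.const_mul _).integrableOn) measurableSet_Iic ?_
          intro t _
          calc ‖((Real.sin (κ * (x - t)) / κ : ℝ) : ℂ) * q t * f t‖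
              = ‖((Real.sin (κ * (x - t)) / κ : ℝ) : ℂ)‖ * ‖q t * f t‖ := by
                rw [mul_assoc, norm_mul]
            _ ≤ (1/|κ|) * ‖u t‖ := mul_le_mul_of_nonneg_right (hkerb x t) (norm_nonneg _)
      _ = (1/|κ|) * ∫ t in Set.Iic x, ‖u t‖ := integral_const_mul _ _
  have h3 : Tendsto (fun x => f x - Complex.exp (-(Complex.I * κ * x))) atBot (nhds 0) := by
    have hg := (tail_Iic hui).const_mul (1/|κ|)
    rw [mul_zero] at hg
    exact squeeze_zero_norm hbound1 hg
  have hPb : ∀ x : ℝ, ‖P x‖ ≤ ∫ t in Set.Iic x, ‖u t‖ := by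
    intro x
    refine (norm_integral_le_integral_norm _).trans ?_
    refine setIntegral_mono_on (hPi.norm.integrableOn) (hui.norm.integrableOn)
      measurableSet_Iic fun t _ => ?_
    rw [norm_mul, Complex.norm_real, Real.norm_eq_abs]
    exact mul_le_of_le_one_left (norm_nonneg _) (Real.abs_cos_le_one _)
  have hQb : ∀ x : ℝ, ‖Q x‖ ≤ ∫ t in Set.Iic x, ‖u t‖ := by
    intro x
    refine (norm_integral_le_integral_norm _).trans ?_
    refine setIntegral_mono_on (hQi.norm.integrableOn) (hui.norm.integrableOn)
      measurableSet_Iic fun t _ => ?_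
    rw [norm_mul, Complex.norm_real, Real.norm_eq_abs]
    exact mul_le_of_le_one_left (norm_nonneg _) (Real.abs_sin_le_one _)
  have hbound2 : ∀ x : ℝ, ‖f1 x + Complex.I * κ * Complex.exp (-(Complex.I * κ * x))‖
      ≤ 2 * ∫ t in Set.Iic x, ‖u t‖ := by
    intro x
    have h0 : f1 x + Complex.I * κ * Complex.exp (-(Complex.I * κ * x))
        = ((Real.cos (κ * x):ℝ):ℂ) * P x + ((Real.sin (κ * x):ℝ):ℂ) * Q x := by
      rw [hf1]; ring
    rw [h0]
    calc ‖((Real.cos (κ * x):ℝ):ℂ) * P x + ((Real.sin (κ * x):ℝ):ℂ) * Q x‖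
        ≤ ‖((Real.cos (κ * x):ℝ):ℂ) * P x‖ + ‖((Real.sin (κ * x):ℝ):ℂ) * Q x‖ := norm_add_le _ _
      _ ≤ ‖P x‖ + ‖Q x‖ := by
          rw [norm_mul, norm_mul, Complex.norm_real, Complex.norm_real, Real.norm_eq_abs,
            Real.norm_eq_abs]
          exact add_le_add (mul_le_of_le_one_left (norm_nonneg _) (Real.abs_cos_le_one _))
            (mul_le_of_le_one_left (norm_nonneg _) (Real.abs_sin_le_one _))
      _ ≤ (∫ t in Set.Iic x, ‖u t‖) + ∫ t in Set.Iic x, ‖u t‖ := add_le_add (hPb x) (hQb x)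
      _ = 2 * ∫ t in Set.Iic x, ‖u t‖ := by ring
  have h4 : Tendsto (fun x => f1 x + Complex.I * κ * Complex.exp (-(Complex.I * κ * x)))
      atBot (nhds 0) := by
    have hg := (tail_Iic hui).const_mul (2:ℝ)
    rw [mul_zero] at hg
    exact squeeze_zero_norm hbound2 hg
  exact ⟨f1, hfD, hf1D, h3, h4⟩



/-- Unitarity of the scattering coefficients: for a real-valued Faddeev-class potential,
if `f₋(k,·) = c₁ f₊(k,·) + c₂ f₊(−k,·)` then `|c₂|² − |c₁|² = 1`. -/
theorem scattering_coefficients_unitarity (q : ℝ → ℂ) (hq : Continuous q)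
    (hqreal : ∀ x : ℝ, (q x).im = 0)
    (hq' : Integrable (fun x => (1 + |x|) * ‖q x‖)) (k : ℝ) (hk : k ≠ 0)
    (fpk fpmk fmk : ℝ → ℂ)
    (hfpk : Continuous fpk) (hfpkb : ∃ C : ℝ, ∀ x, ‖fpk x‖ ≤ C)
    (hfpkeq : ∀ x : ℝ, fpk x = Complex.exp (Complex.I * k * x) -
        ∫ t in Set.Ici x, ((Real.sin (k * (x - t)) / k : ℝ) : ℂ) * q t * fpk t)
    (hfpmk : Continuous fpmk) (hfpmkb : ∃ C : ℝ, ∀ x, ‖fpmk x‖ ≤ C)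
    (hfpmkeq : ∀ x : ℝ, fpmk x = Complex.exp (Complex.I * (-k) * x) -
        ∫ t in Set.Ici x, ((Real.sin ((-k) * (x - t)) / (-k) : ℝ) : ℂ) * q t * fpmk t)
    (hfmk : Continuous fmk) (hfmkb : ∃ C : ℝ, ∀ x, ‖fmk x‖ ≤ C)
    (hfmkeq : ∀ x : ℝ, fmk x = Complex.exp (-(Complex.I * k * x)) +
        ∫ t in Set.Iic x, ((Real.sin (k * (x - t)) / k : ℝ) : ℂ) * q t * fmk t)
    (c₁ c₂ : ℂ)
    (hc : ∀ x : ℝ, fmk x = c₁ * fpk x + c₂ * fpmk x) :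
    ‖c₂‖ ^ 2 - ‖c₁‖ ^ 2 = 1 := by
  -- basic integrability
  have hqI : Integrable q := by
    refine hq'.mono' hq.aestronglyMeasurable (ae_of_all _ fun x => ?_)
    have h1 : (1:ℝ) ≤ 1 + |x| := by linarith [abs_nonneg x]
    exact le_mul_of_one_le_left (norm_nonneg _) h1
  have hint : ∀ f : ℝ → ℂ, Continuous f → (∃ C : ℝ, ∀ x, ‖f x‖ ≤ C) →
      Integrable (fun t => q t * f t) := by
    rintro f hfc ⟨C, hC⟩
    exact (hqI.bdd_mul hfc.aestronglyMeasurable (ae_of_all _ hC)).congr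
      (ae_of_all _ fun t => mul_comm _ _)
  have hmk : (-k) ≠ 0 := neg_ne_zero.mpr hk
  -- Jost solutions: derivatives and asymptotics
  obtain ⟨fp1, hfp1D, _, hfpT, hfpT'⟩ :=
    right_deriv hq hk hfpk (hint fpk hfpk hfpkb) hfpkeq
  obtain ⟨fpm1, hfpm1D, _, hfpmT0, hfpmT0'⟩ :=
    right_deriv hq hmk hfpmk (hint fpmk hfpmk hfpmkb)
      (by intro x; rw [hfpmkeq x]; norm_cast)
  obtain ⟨fm1, hfm1D, hfm1D2, hfmT, hfmT'⟩ :=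
    left_deriv hq hk hfmk (hint fmk hfmk hfmkb) hfmkeq
  -- normalize the fpmk asymptotics
  have hfpmT : Tendsto (fun x => fpmk x - Complex.exp (-(Complex.I * k * x))) atTop (nhds 0) := by
    have he : (fun x : ℝ => fpmk x - Complex.exp (Complex.I * ((-k : ℝ)) * x))
        = fun x : ℝ => fpmk x - Complex.exp (-(Complex.I * k * x)) := by
      funext x; congr 2; push_cast; ring
    rw [← he]; exact hfpmT0
  have hfpmT' : Tendsto (fun x => fpm1 x + Complex.I * k * Complex.exp (-(Complex.I * k * x)))
      atTop (nhds 0) := by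
    have he : (fun x : ℝ => fpm1 x - Complex.I * ((-k : ℝ)) * Complex.exp (Complex.I * ((-k : ℝ)) * x))
        = fun x : ℝ => fpm1 x + Complex.I * k * Complex.exp (-(Complex.I * k * x)) := by
      funext x
      have : Complex.exp (Complex.I * ((-k : ℝ)) * x) = Complex.exp (-(Complex.I * k * x)) := by
        congr 1; push_cast; ring
      rw [this]; push_cast; ring
    rw [← he]; exact hfpmT0'
  -- derivative of the relation
  have hderiv_comb : ∀ x : ℝ, fm1 x = c₁ * fp1 x + c₂ * fpm1 x := by
    intro x
    have h1 : HasDerivAt (fun y => c₁ * fpk y + c₂ * fpmk y) (c₁ * fp1 x + c₂ * fpm1 x) x :=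
      ((hfp1D x).const_mul c₁).add ((hfpm1D x).const_mul c₂)
    have h2 : HasDerivAt fmk (c₁ * fp1 x + c₂ * fpm1 x) x := by
      have hfun : fmk = fun y => c₁ * fpk y + c₂ * fpmk y := funext hc
      rw [hfun]; exact h1
    exact (hfm1D x).unique h2
  -- the Wronskian of fmk with its conjugate
  set W : ℝ → ℂ := fun x => fmk x * star (fm1 x) - fm1 x * star (fmk x) with hWdef
  have hsI : star Complex.I = -Complex.I := by
    rw [Complex.star_def, Complex.conj_I]
  have hsk : star ((k:ℂ)) = (k:ℂ) := by
    rw [Complex.star_def, Complex.conj_ofReal]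
  have hqstar : ∀ x : ℝ, star (q x) = q x := by
    intro x
    rw [Complex.star_def]
    exact Complex.conj_eq_iff_im.mpr (hqreal x)
  have hWD : ∀ x : ℝ, HasDerivAt W 0 x := by
    intro x
    have hA := (hfm1D x).mul ((hfm1D2 x).star)
    have hB := (hfm1D2 x).mul ((hfm1D x).star)
    have hAB := hA.sub hB
    convert hAB using 1
    · rfl
    · rfl
    simp only [star_mul', star_sub, star_pow, hsk, hqstar]
    ring
  have hWc : ∀ x : ℝ, W x = W 0 := by
    intro x
    exact is_const_of_deriv_eq_zero (fun y => (hWD y).differentiableAt)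
      (fun y => (hWD y).deriv) x 0
  -- conjugation facts for exponentials
  have hstarEm : ∀ x : ℝ, star (Complex.exp (-(Complex.I * k * x))) = Complex.exp (Complex.I * k * x) := by
    intro x
    rw [Complex.star_def, ← Complex.exp_conj]
    congr 1
    simp [Complex.conj_ofReal]
  have hstarEp : ∀ x : ℝ, star (Complex.exp (Complex.I * k * x)) = Complex.exp (-(Complex.I * k * x)) := by
    intro x
    rw [Complex.star_def, ← Complex.exp_conj]
    congr 1
    simp [Complex.conj_ofReal]
  have hEE : ∀ x : ℝ, Complex.exp (-(Complex.I * k * x)) * Complex.exp (Complex.I * k * x) = 1 := by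
    intro x
    rw [← Complex.exp_add]
    simp
  have hEE' : ∀ x : ℝ, Complex.exp (Complex.I * k * x) * Complex.exp (-(Complex.I * k * x)) = 1 := by
    intro x
    rw [← Complex.exp_add]
    simp
  have hEnorm : ∀ x : ℝ, ‖Complex.exp (-(Complex.I * k * x))‖ = 1 := by
    intro x
    rw [Complex.norm_exp]
    simp
  have hEnorm' : ∀ x : ℝ, ‖Complex.exp (Complex.I * k * x)‖ = 1 := by
    intro x
    rw [Complex.norm_exp]
    simp
  -- limit of W at -infinity
  set a : ℝ → ℂ := fun x => fmk x - Complex.exp (-(Complex.I * k * x)) with hadef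
  set b : ℝ → ℂ := fun x => fm1 x + Complex.I * k * Complex.exp (-(Complex.I * k * x)) with hbdef
  have han : Tendsto (fun x => ‖a x‖) atBot (nhds 0) := by simpa using hfmT.norm
  have hbn : Tendsto (fun x => ‖b x‖) atBot (nhds 0) := by simpa using hfmT'.norm
  have hWid : ∀ x : ℝ, W x = 2 * Complex.I * k +
      (Complex.exp (-(Complex.I * k * x)) * star (b x)
        + Complex.I * k * a x * star (Complex.exp (-(Complex.I * k * x)))
        + a x * star (b x)
        + Complex.I * k * Complex.exp (-(Complex.I * k * x)) * star (a x)
        - b x * star (Complex.exp (-(Complex.I * k * x)))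
        - b x * star (a x)) := by
    intro x
    simp only [hWdef, hadef, hbdef, star_add, star_sub, star_mul, hsI, hsk, hstarEm]
    linear_combination (2 * Complex.I * (k:ℂ)) * hEE x
  have hab : Tendsto (fun x : ℝ => ‖a x‖ * ‖b x‖) atBot (nhds 0) := by
    have := han.mul hbn; simpa using this
  have hba : Tendsto (fun x : ℝ => ‖b x‖ * ‖a x‖) atBot (nhds 0) := by
    have := hbn.mul han; simpa using this
  have hka : Tendsto (fun x : ℝ => |k| * ‖a x‖) atBot (nhds 0) := by
    have := han.const_mul |k|; simpa using this
  have hTbot : Tendsto W atBot (nhds (2 * Complex.I * k)) := by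
    have h1 : Tendsto (fun x : ℝ => Complex.exp (-(Complex.I * k * x)) * star (b x)) atBot (nhds 0) := by
      refine squeeze_zero_norm (fun x => ?_) hbn
      rw [norm_mul, hEnorm, norm_star, one_mul]
    have h2 : Tendsto (fun x : ℝ => Complex.I * k * a x * star (Complex.exp (-(Complex.I * k * x)))) atBot (nhds 0) := by
      refine squeeze_zero_norm (fun x => ?_) hka
      rw [norm_mul, norm_star, hEnorm, mul_one, norm_mul, norm_mul]
      simp
    have h3 : Tendsto (fun x : ℝ => a x * star (b x)) atBot (nhds 0) := by
      refine squeeze_zero_norm (fun x => ?_) hab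
      rw [norm_mul, norm_star]
    have h4 : Tendsto (fun x : ℝ => Complex.I * k * Complex.exp (-(Complex.I * k * x)) * star (a x)) atBot (nhds 0) := by
      refine squeeze_zero_norm (fun x => ?_) hka
      rw [norm_mul, norm_star, norm_mul, norm_mul, hEnorm, mul_one]
      simp
    have h5 : Tendsto (fun x : ℝ => b x * star (Complex.exp (-(Complex.I * k * x)))) atBot (nhds 0) := by
      refine squeeze_zero_norm (fun x => ?_) hbn
      rw [norm_mul, norm_star, hEnorm, mul_one]
    have h6 : Tendsto (fun x : ℝ => b x * star (a x)) atBot (nhds 0) := by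
      refine squeeze_zero_norm (fun x => ?_) hba
      rw [norm_mul, norm_star]
    have hsum := ((((h1.add h2).add h3).add h4).sub h5).sub h6
    have hfin := Tendsto.const_add (2 * Complex.I * (k:ℂ)) hsum
    have hWfun : W = fun x : ℝ => 2 * Complex.I * (k:ℂ) +
        (Complex.exp (-(Complex.I * k * x)) * star (b x)
          + Complex.I * k * a x * star (Complex.exp (-(Complex.I * k * x)))
          + a x * star (b x)
          + Complex.I * k * Complex.exp (-(Complex.I * k * x)) * star (a x)
          - b x * star (Complex.exp (-(Complex.I * k * x)))
          - b x * star (a x)) := funext hWid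
    rw [hWfun]
    simpa using hfin
  -- limit of W at +infinity
  set a2 : ℝ → ℂ := fun x => c₁ * (fpk x - Complex.exp (Complex.I * k * x))
      + c₂ * (fpmk x - Complex.exp (-(Complex.I * k * x))) with ha2def
  set b2 : ℝ → ℂ := fun x => c₁ * (fp1 x - Complex.I * k * Complex.exp (Complex.I * k * x))
      + c₂ * (fpm1 x + Complex.I * k * Complex.exp (-(Complex.I * k * x))) with hb2def
  have ha2 : Tendsto a2 atTop (nhds 0) := by
    have := (hfpT.const_mul c₁).add (hfpmT.const_mul c₂); simpa using this
  have hb2 : Tendsto b2 atTop (nhds 0) := by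
    have h1 : Tendsto (fun x => fp1 x - Complex.I * k * Complex.exp (Complex.I * k * x))
        atTop (nhds 0) := hfpT'
    have := (h1.const_mul c₁).add (hfpmT'.const_mul c₂); simpa using this
  have han2 : Tendsto (fun x : ℝ => ‖a2 x‖) atTop (nhds 0) := by simpa using ha2.norm
  have hbn2 : Tendsto (fun x : ℝ => ‖b2 x‖) atTop (nhds 0) := by simpa using hb2.norm
  have hfmk_dec : ∀ x : ℝ, fmk x = c₁ * Complex.exp (Complex.I * k * x)
      + c₂ * Complex.exp (-(Complex.I * k * x)) + a2 x := by
    intro x; simp only [ha2def]; rw [hc x]; ring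
  have hfm1_dec : ∀ x : ℝ, fm1 x = Complex.I * k * c₁ * Complex.exp (Complex.I * k * x)
      - Complex.I * k * c₂ * Complex.exp (-(Complex.I * k * x)) + b2 x := by
    intro x; simp only [hb2def]; rw [hderiv_comb x]; ring
  set L : ℂ := 2 * Complex.I * k * (c₂ * star c₂ - c₁ * star c₁) with hLdef
  have hWid2 : ∀ x : ℝ, W x = L +
      ((c₁ * Complex.exp (Complex.I * k * x) + c₂ * Complex.exp (-(Complex.I * k * x))) * star (b2 x)
        + a2 x * star (Complex.I * k * c₁ * Complex.exp (Complex.I * k * x)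
            - Complex.I * k * c₂ * Complex.exp (-(Complex.I * k * x)))
        + a2 x * star (b2 x)
        - (Complex.I * k * c₁ * Complex.exp (Complex.I * k * x)
            - Complex.I * k * c₂ * Complex.exp (-(Complex.I * k * x))) * star (a2 x)
        - b2 x * star (c₁ * Complex.exp (Complex.I * k * x) + c₂ * Complex.exp (-(Complex.I * k * x)))
        - b2 x * star (a2 x)) := by
    intro x
    simp only [hWdef]
    rw [hfmk_dec x, hfm1_dec x, hLdef]
    simp only [star_add, star_sub, star_mul, hsI, hsk, hstarEm, hstarEp]
    linear_combination (2 * Complex.I * (k:ℂ) * (c₂ * star c₂ - c₁ * star c₁)) * hEE' x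
  have hM : ∀ x : ℝ, ‖c₁ * Complex.exp (Complex.I * k * x)
      + c₂ * Complex.exp (-(Complex.I * k * x))‖ ≤ ‖c₁‖ + ‖c₂‖ := by
    intro x
    refine (norm_add_le _ _).trans ?_
    rw [norm_mul, norm_mul, hEnorm', hEnorm, mul_one, mul_one]
  have hM1 : ∀ x : ℝ, ‖Complex.I * k * c₁ * Complex.exp (Complex.I * k * x)
      - Complex.I * k * c₂ * Complex.exp (-(Complex.I * k * x))‖ ≤ |k| * ‖c₁‖ + |k| * ‖c₂‖ := by
    intro x
    refine (norm_sub_le _ _).trans ?_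
    simp only [norm_mul, hEnorm', hEnorm, mul_one, Complex.norm_I, one_mul,
      Complex.norm_real, Real.norm_eq_abs, le_refl]
  have hTtop : Tendsto W atTop (nhds L) := by
    have h1 : Tendsto (fun x : ℝ => (c₁ * Complex.exp (Complex.I * k * x)
        + c₂ * Complex.exp (-(Complex.I * k * x))) * star (b2 x)) atTop (nhds 0) := by
      refine squeeze_zero_norm (fun x => ?_) (by simpa using hbn2.const_mul (‖c₁‖ + ‖c₂‖))
      rw [norm_mul, norm_star]
      exact mul_le_mul_of_nonneg_right (hM x) (norm_nonneg _)
    have h2 : Tendsto (fun x : ℝ => a2 x * star (Complex.I * k * c₁ * Complex.exp (Complex.I * k * x)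
        - Complex.I * k * c₂ * Complex.exp (-(Complex.I * k * x)))) atTop (nhds 0) := by
      refine squeeze_zero_norm (fun x => ?_) (by simpa using han2.mul_const (|k| * ‖c₁‖ + |k| * ‖c₂‖))
      rw [norm_mul, norm_star]
      exact mul_le_mul_of_nonneg_left (hM1 x) (norm_nonneg _)
    have h3 : Tendsto (fun x : ℝ => a2 x * star (b2 x)) atTop (nhds 0) := by
      have hg : Tendsto (fun x : ℝ => ‖a2 x‖ * ‖b2 x‖) atTop (nhds 0) := by
        have := han2.mul hbn2; simpa using this
      refine squeeze_zero_norm (fun x => ?_) hg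
      rw [norm_mul, norm_star]
    have h4 : Tendsto (fun x : ℝ => (Complex.I * k * c₁ * Complex.exp (Complex.I * k * x)
        - Complex.I * k * c₂ * Complex.exp (-(Complex.I * k * x))) * star (a2 x)) atTop (nhds 0) := by
      refine squeeze_zero_norm (fun x => ?_) (by simpa using han2.const_mul (|k| * ‖c₁‖ + |k| * ‖c₂‖))
      rw [norm_mul, norm_star]
      exact mul_le_mul_of_nonneg_right (hM1 x) (norm_nonneg _)
    have h5 : Tendsto (fun x : ℝ => b2 x * star (c₁ * Complex.exp (Complex.I * k * x)
        + c₂ * Complex.exp (-(Complex.I * k * x)))) atTop (nhds 0) := by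
      refine squeeze_zero_norm (fun x => ?_) (by simpa using hbn2.mul_const (‖c₁‖ + ‖c₂‖))
      rw [norm_mul, norm_star]
      exact mul_le_mul_of_nonneg_left (hM x) (norm_nonneg _)
    have h6 : Tendsto (fun x : ℝ => b2 x * star (a2 x)) atTop (nhds 0) := by
      have hg : Tendsto (fun x : ℝ => ‖b2 x‖ * ‖a2 x‖) atTop (nhds 0) := by
        have := hbn2.mul han2; simpa using this
      refine squeeze_zero_norm (fun x => ?_) hg
      rw [norm_mul, norm_star]
    have hsum := ((((h1.add h2).add h3).sub h4).sub h5).sub h6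
    have hfin := Tendsto.const_add L hsum
    have hWfun : W = fun x : ℝ => L +
        ((c₁ * Complex.exp (Complex.I * k * x) + c₂ * Complex.exp (-(Complex.I * k * x))) * star (b2 x)
          + a2 x * star (Complex.I * k * c₁ * Complex.exp (Complex.I * k * x)
              - Complex.I * k * c₂ * Complex.exp (-(Complex.I * k * x)))
          + a2 x * star (b2 x)
          - (Complex.I * k * c₁ * Complex.exp (Complex.I * k * x)
              - Complex.I * k * c₂ * Complex.exp (-(Complex.I * k * x))) * star (a2 x)
          - b2 x * star (c₁ * Complex.exp (Complex.I * k * x) + c₂ * Complex.exp (-(Complex.I * k * x)))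
          - b2 x * star (a2 x)) := funext hWid2
    simp only [add_zero, sub_zero] at hfin
    rw [hWfun]
    exact hfin
  -- conclude
  have hWconstBot : Tendsto W atBot (nhds (W 0)) := by
    have : W = fun _ : ℝ => W 0 := funext hWc
    rw [this]; exact tendsto_const_nhds
  have hWconstTop : Tendsto W atTop (nhds (W 0)) := by
    have : W = fun _ : ℝ => W 0 := funext hWc
    rw [this]; exact tendsto_const_nhds
  have hbotval : 2 * Complex.I * (k:ℂ) = W 0 := tendsto_nhds_unique hTbot hWconstBot
  have htopval : L = W 0 := tendsto_nhds_unique hTtop hWconstTop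
  have hIk : (2 * Complex.I * (k:ℂ)) ≠ 0 :=
    mul_ne_zero (mul_ne_zero two_ne_zero Complex.I_ne_zero) (Complex.ofReal_ne_zero.mpr hk)
  have key : c₂ * star c₂ - c₁ * star c₁ = 1 := by
    have hLeq : 2 * Complex.I * (k:ℂ) * (c₂ * star c₂ - c₁ * star c₁)
        = 2 * Complex.I * (k:ℂ) * 1 := by
      rw [mul_one, hLdef] at *
      rw [htopval, ← hbotval]
    exact mul_left_cancel₀ hIk hLeq
  have key2 : c₂ * (starRingEnd ℂ) c₂ - c₁ * (starRingEnd ℂ) c₁ = 1 := key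
  rw [Complex.mul_conj, Complex.mul_conj] at key2
  have key3 : (Complex.normSq c₂ - Complex.normSq c₁ : ℝ) = 1 := by exact_mod_cast key2
  rw [Complex.normSq_eq_norm_sq, Complex.normSq_eq_norm_sq] at key3
  simpa using key3
end

section
/- (High-energy asymptotics of the scattering coefficients.) Let q : ℝ → ℂ be continuous with ∫_ℝ (1+|x|)|q(x)| dx < ∞. For each nonzero real k let (c₁(k), c₂(k)) be the unique complex constants with f₋(k,x) = c₁(k) f₊(k,x) + c₂(k) f₊(−k,x) for all x. Then c₂(k) → 1 and c₁(k) → 0 as |k| → ∞. -/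
open MeasureTheory Filter

/-- Uniform high-energy estimate for a bounded solution of a Jost-type
integral equation: `‖f x - E x‖ ≤ 2 Q / |k|` where `Q = ∫ ‖q‖`. -/
lemma jost_unif (q : ℝ → ℂ) (hQ : Integrable (fun t => ‖q t‖)) (k : ℝ) (hk0 : k ≠ 0)
    (hk : (∫ t, ‖q t‖) ≤ |k| / 8) (f E : ℝ → ℂ) (C : ℝ) (hb : ∀ x, ‖f x‖ ≤ C)
    (hE : ∀ x, ‖E x‖ = 1) (S : ℝ → Set ℝ)
    (heq : ∀ x, ‖f x - E x‖ =
      ‖∫ t in S x, ((Real.sin (k * (x - t)) / k : ℝ) : ℂ) * q t * f t‖) :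
    ∀ x, ‖f x - E x‖ ≤ 2 * (∫ t, ‖q t‖) / |k| := by
  set Q := ∫ t, ‖q t‖ with hQdef
  have hk' : 0 < |k| := abs_pos.2 hk0
  have hQ0 : 0 ≤ Q := integral_nonneg fun t => norm_nonneg _
  have hbdd : BddAbove (Set.range fun x => ‖f x‖) := ⟨C, by rintro _ ⟨x, rfl⟩; exact hb x⟩
  set M := ⨆ x, ‖f x‖ with hMdef
  have hMx : ∀ x, ‖f x‖ ≤ M := fun x => le_ciSup hbdd x
  have hM0 : 0 ≤ M := le_trans (norm_nonneg _) (hMx 0)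
  have key : ∀ x, ‖f x - E x‖ ≤ Q * M / |k| := by
    intro x
    rw [heq x]
    refine le_trans (norm_integral_le_integral_norm _) ?_
    have hpt : ∀ t, ‖((Real.sin (k * (x - t)) / k : ℝ) : ℂ) * q t * f t‖
        ≤ ‖q t‖ * (M / |k|) := by
      intro t
      rw [norm_mul, norm_mul]
      have h1 : ‖(((Real.sin (k * (x - t)) / k : ℝ)) : ℂ)‖ ≤ 1 / |k| := by
        rw [Complex.norm_real, Real.norm_eq_abs, abs_div]
        gcongr
        exact Real.abs_sin_le_one _
      calc ‖(((Real.sin (k * (x - t)) / k : ℝ)) : ℂ)‖ * ‖q t‖ * ‖f t‖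
          ≤ (1 / |k|) * ‖q t‖ * M := by
            gcongr
            exact hMx t
        _ = ‖q t‖ * (M / |k|) := by ring
    refine le_trans (integral_mono_of_nonneg (Eventually.of_forall fun t => norm_nonneg _)
      ((hQ.mul_const (M / |k|)).restrict) (Eventually.of_forall fun t => hpt t)) ?_
    rw [integral_mul_const]
    have hsub : (∫ t in S x, ‖q t‖) ≤ Q :=
      setIntegral_le_integral hQ (Eventually.of_forall fun t => norm_nonneg _)
    calc (∫ t in S x, ‖q t‖) * (M / |k|) ≤ Q * (M / |k|) :=
          mul_le_mul_of_nonneg_right hsub (div_nonneg hM0 hk'.le)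
      _ = Q * M / |k| := by ring
  have hM1 : M ≤ 1 + Q * M / |k| := by
    apply ciSup_le
    intro x
    have hfx : f x = (f x - E x) + E x := by ring
    calc ‖f x‖ = ‖(f x - E x) + E x‖ := by rw [← hfx]
      _ ≤ ‖f x - E x‖ + ‖E x‖ := norm_add_le _ _
      _ ≤ Q * M / |k| + 1 := by rw [hE x]; linarith [key x]
      _ = 1 + Q * M / |k| := by ring
  have h8 : Q * M / |k| ≤ M / 8 := by
    rw [div_le_div_iff₀ hk' (by norm_num : (0:ℝ) < 8)]
    nlinarith [mul_le_mul_of_nonneg_right hk hM0]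
  have hM2 : M ≤ 2 := by linarith
  intro x
  have h2 : Q * M / |k| ≤ 2 * Q / |k| := by
    have : Q * M ≤ 2 * Q := by nlinarith
    exact div_le_div_of_nonneg_right this hk'.le
  linarith [key x]

/-- High-energy asymptotics of the scattering coefficients: with
`f₋(k,·) = c₁(k) f₊(k,·) + c₂(k) f₊(−k,·)` for every nonzero `k`, one has
`c₂(k) → 1` and `c₁(k) → 0` as `|k| → ∞`. -/
theorem scattering_coefficients_high_energy (q : ℝ → ℂ) (hq : Continuous q)
    (hq' : Integrable (fun x => (1 + |x|) * ‖q x‖))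
    (fp fm : ℝ → ℝ → ℂ) (c₁ c₂ : ℝ → ℂ)
    (hfp : ∀ k : ℝ, k ≠ 0 → Continuous (fp k) ∧ (∃ C : ℝ, ∀ x, ‖fp k x‖ ≤ C) ∧
        ∀ x : ℝ, fp k x = Complex.exp (Complex.I * k * x) -
          ∫ t in Set.Ici x, ((Real.sin (k * (x - t)) / k : ℝ) : ℂ) * q t * fp k t)
    (hfm : ∀ k : ℝ, k ≠ 0 → Continuous (fm k) ∧ (∃ C : ℝ, ∀ x, ‖fm k x‖ ≤ C) ∧
        ∀ x : ℝ, fm k x = Complex.exp (-(Complex.I * k * x)) +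
          ∫ t in Set.Iic x, ((Real.sin (k * (x - t)) / k : ℝ) : ℂ) * q t * fm k t)
    (hc : ∀ k : ℝ, k ≠ 0 → ∀ x : ℝ, fm k x = c₁ k * fp k x + c₂ k * fp (-k) x) :
    Tendsto c₂ (Filter.cocompact ℝ) (nhds 1) ∧
    Tendsto c₁ (Filter.cocompact ℝ) (nhds 0) := by
  have hQint : Integrable (fun t => ‖q t‖) := by
    refine hq'.mono' hq.norm.aestronglyMeasurable (Eventually.of_forall fun t => ?_)
    have h1 : (0:ℝ) ≤ ‖q t‖ := norm_nonneg _
    have h2 : (0:ℝ) ≤ |t| := abs_nonneg t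
    rw [Real.norm_eq_abs, abs_norm]
    nlinarith
  set Q := ∫ t, ‖q t‖ with hQdef
  have hQ0 : 0 ≤ Q := integral_nonneg fun t => norm_nonneg _
  have claim : ∀ k : ℝ, 8 * Q + 1 ≤ |k| →
      ‖c₁ k‖ ≤ 8 * Q / |k| ∧ ‖c₂ k - 1‖ ≤ 8 * Q / |k| := by
    intro k hkQ
    have hk' : 0 < |k| := lt_of_lt_of_le (by linarith) hkQ
    have hk : k ≠ 0 := by
      intro h; rw [h] at hk'; simp at hk'
    have hQk : Q ≤ |k| / 8 := by linarith
    obtain ⟨-, ⟨Cp, hCp⟩, hpe⟩ := hfp k hk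
    obtain ⟨-, ⟨Cm, hCm⟩, hme⟩ := hfp (-k) (neg_ne_zero.2 hk)
    obtain ⟨-, ⟨Cf, hCf⟩, hfe⟩ := hfm k hk
    have hEnorm : ∀ z : ℂ, z.re = 0 → ‖Complex.exp z‖ = 1 := by
      intro z hz
      rw [Complex.norm_exp, hz, Real.exp_zero]
    have Hp : ∀ x, ‖fp k x - Complex.exp (Complex.I * k * x)‖ ≤ 2 * Q / |k| := by
      refine jost_unif q hQint k hk hQk (fp k) _ Cp hCp (fun x => hEnorm _ (by simp))
        (fun x => Set.Ici x) (fun x => ?_)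
      have h1 : fp k x - Complex.exp (Complex.I * k * x)
          = -(∫ t in Set.Ici x, ((Real.sin (k * (x - t)) / k : ℝ) : ℂ) * q t * fp k t) := by
        rw [hpe x]; ring
      rw [h1, norm_neg]
    have hQk' : Q ≤ |(-k)| / 8 := by rwa [abs_neg]
    have Hm' : ∀ x, ‖fp (-k) x - Complex.exp (Complex.I * ((-k : ℝ) : ℂ) * x)‖
        ≤ 2 * Q / |(-k)| := by
      refine jost_unif q hQint (-k) (neg_ne_zero.2 hk) hQk' (fp (-k)) _ Cm hCm
        (fun x => hEnorm _ (by simp)) (fun x => Set.Ici x) (fun x => ?_)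
      have h1 : fp (-k) x - Complex.exp (Complex.I * ((-k : ℝ) : ℂ) * x)
          = -(∫ t in Set.Ici x, ((Real.sin ((-k) * (x - t)) / (-k) : ℝ) : ℂ) * q t * fp (-k) t) := by
        rw [hme x]; ring
      rw [h1, norm_neg]
    have Hm : ∀ x, ‖fp (-k) x - Complex.exp (Complex.I * ((-k : ℝ) : ℂ) * x)‖
        ≤ 2 * Q / |k| := by
      intro x
      have h := Hm' x
      rwa [abs_neg] at h
    have Hf : ∀ x, ‖fm k x - Complex.exp (-(Complex.I * k * x))‖ ≤ 2 * Q / |k| := by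
      refine jost_unif q hQint k hk hQk (fm k) _ Cf hCf (fun x => hEnorm _ (by simp))
        (fun x => Set.Iic x) (fun x => ?_)
      rw [hfe x, add_sub_cancel_left]
    set ε := 2 * Q / |k| with hεdef
    have hε0 : 0 ≤ ε := div_nonneg (by linarith) hk'.le
    have hε4 : ε ≤ 1 / 4 := by
      rw [hεdef, div_le_div_iff₀ hk' (by norm_num : (0:ℝ) < 4)]
      linarith
    set x₀ := Real.pi / (2 * k) with hx₀def
    have hkx' : k * x₀ = Real.pi / 2 := by
      rw [hx₀def]
      field_simp
    have hkx : (k : ℂ) * (x₀ : ℂ) = ((Real.pi / 2 : ℝ) : ℂ) := by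
      rw [← Complex.ofReal_mul, hkx']
    have e1 : Complex.exp (Complex.I * k * x₀) = Complex.I := by
      have h : Complex.I * k * x₀ = ((Real.pi / 2 : ℝ) : ℂ) * Complex.I := by
        linear_combination Complex.I * hkx
      rw [h, Complex.exp_mul_I, ← Complex.ofReal_cos, ← Complex.ofReal_sin,
        Real.cos_pi_div_two, Real.sin_pi_div_two]
      simp
    have e3 : Complex.exp (-(Complex.I * k * x₀)) = -Complex.I := by
      rw [Complex.exp_neg, e1, Complex.inv_I]
    have e2 : Complex.exp (Complex.I * ((-k : ℝ) : ℂ) * x₀) = -Complex.I := by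
      have h : Complex.I * ((-k : ℝ) : ℂ) * x₀ = -(Complex.I * k * x₀) := by
        push_cast
        ring
      rw [h, Complex.exp_neg, e1, Complex.inv_I]
    have A0 : ‖fm k 0 - 1‖ ≤ ε := by simpa using Hf 0
    have B0 : ‖fp k 0 - 1‖ ≤ ε := by simpa using Hp 0
    have C0 : ‖fp (-k) 0 - 1‖ ≤ ε := by simpa using Hm 0
    have A1 : ‖fm k x₀ + Complex.I‖ ≤ ε := by
      have h := Hf x₀
      rw [e3, sub_neg_eq_add] at h
      exact h
    have B1 : ‖fp k x₀ - Complex.I‖ ≤ ε := by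
      have h := Hp x₀
      rwa [e1] at h
    have C1 : ‖fp (-k) x₀ + Complex.I‖ ≤ ε := by
      have h := Hm x₀
      rw [e2, sub_neg_eq_add] at h
      exact h
    have h0 := hc k hk 0
    have h1 := hc k hk x₀
    have id0 : c₁ k + c₂ k - 1
        = (fm k 0 - 1) - c₁ k * (fp k 0 - 1) - c₂ k * (fp (-k) 0 - 1) := by
      linear_combination -h0
    have id1 : (c₁ k - c₂ k + 1) * Complex.I
        = (fm k x₀ + Complex.I) - c₁ k * (fp k x₀ - Complex.I)
          - c₂ k * (fp (-k) x₀ + Complex.I) := by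
      linear_combination -h1
    have n0 : ‖c₁ k + c₂ k - 1‖ ≤ ε * (1 + ‖c₁ k‖ + ‖c₂ k‖) := by
      rw [id0]
      have nY : ‖c₁ k * (fp k 0 - 1)‖ ≤ ‖c₁ k‖ * ε := by
        rw [norm_mul]; exact mul_le_mul_of_nonneg_left B0 (norm_nonneg _)
      have nZ : ‖c₂ k * (fp (-k) 0 - 1)‖ ≤ ‖c₂ k‖ * ε := by
        rw [norm_mul]; exact mul_le_mul_of_nonneg_left C0 (norm_nonneg _)
      calc ‖(fm k 0 - 1) - c₁ k * (fp k 0 - 1) - c₂ k * (fp (-k) 0 - 1)‖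
          ≤ ‖(fm k 0 - 1) - c₁ k * (fp k 0 - 1)‖ + ‖c₂ k * (fp (-k) 0 - 1)‖ :=
            norm_sub_le _ _
        _ ≤ ‖fm k 0 - 1‖ + ‖c₁ k * (fp k 0 - 1)‖ + ‖c₂ k * (fp (-k) 0 - 1)‖ := by
            linarith [norm_sub_le (fm k 0 - 1) (c₁ k * (fp k 0 - 1))]
        _ ≤ ε * (1 + ‖c₁ k‖ + ‖c₂ k‖) := by nlinarith
    have n1 : ‖c₁ k - c₂ k + 1‖ ≤ ε * (1 + ‖c₁ k‖ + ‖c₂ k‖) := by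
      have hI : ‖c₁ k - c₂ k + 1‖ = ‖(c₁ k - c₂ k + 1) * Complex.I‖ := by
        rw [norm_mul, Complex.norm_I, mul_one]
      rw [hI, id1]
      have nY : ‖c₁ k * (fp k x₀ - Complex.I)‖ ≤ ‖c₁ k‖ * ε := by
        rw [norm_mul]; exact mul_le_mul_of_nonneg_left B1 (norm_nonneg _)
      have nZ : ‖c₂ k * (fp (-k) x₀ + Complex.I)‖ ≤ ‖c₂ k‖ * ε := by
        rw [norm_mul]; exact mul_le_mul_of_nonneg_left C1 (norm_nonneg _)
      calc ‖(fm k x₀ + Complex.I) - c₁ k * (fp k x₀ - Complex.I)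
            - c₂ k * (fp (-k) x₀ + Complex.I)‖
          ≤ ‖(fm k x₀ + Complex.I) - c₁ k * (fp k x₀ - Complex.I)‖
            + ‖c₂ k * (fp (-k) x₀ + Complex.I)‖ := norm_sub_le _ _
        _ ≤ ‖fm k x₀ + Complex.I‖ + ‖c₁ k * (fp k x₀ - Complex.I)‖
            + ‖c₂ k * (fp (-k) x₀ + Complex.I)‖ := by
            linarith [norm_sub_le (fm k x₀ + Complex.I) (c₁ k * (fp k x₀ - Complex.I))]
        _ ≤ ε * (1 + ‖c₁ k‖ + ‖c₂ k‖) := by nlinarith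
    have hu : ‖c₁ k‖ ≤ ε * (1 + ‖c₁ k‖ + ‖c₂ k‖) := by
      have h2 : (2 : ℂ) * c₁ k = (c₁ k + c₂ k - 1) + (c₁ k - c₂ k + 1) := by ring
      have h3 : (2 : ℝ) * ‖c₁ k‖ = ‖(2 : ℂ) * c₁ k‖ := by
        rw [norm_mul]; norm_num
      have h4 : ‖(2 : ℂ) * c₁ k‖ ≤ 2 * (ε * (1 + ‖c₁ k‖ + ‖c₂ k‖)) := by
        rw [h2]
        calc ‖(c₁ k + c₂ k - 1) + (c₁ k - c₂ k + 1)‖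
            ≤ ‖c₁ k + c₂ k - 1‖ + ‖c₁ k - c₂ k + 1‖ := norm_add_le _ _
          _ ≤ 2 * (ε * (1 + ‖c₁ k‖ + ‖c₂ k‖)) := by linarith
      linarith
    have hv : ‖c₂ k - 1‖ ≤ ε * (1 + ‖c₁ k‖ + ‖c₂ k‖) := by
      have h2 : (2 : ℂ) * (c₂ k - 1) = (c₁ k + c₂ k - 1) - (c₁ k - c₂ k + 1) := by ring
      have h3 : (2 : ℝ) * ‖c₂ k - 1‖ = ‖(2 : ℂ) * (c₂ k - 1)‖ := by
        rw [norm_mul]; norm_num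
      have h4 : ‖(2 : ℂ) * (c₂ k - 1)‖ ≤ 2 * (ε * (1 + ‖c₁ k‖ + ‖c₂ k‖)) := by
        rw [h2]
        calc ‖(c₁ k + c₂ k - 1) - (c₁ k - c₂ k + 1)‖
            ≤ ‖c₁ k + c₂ k - 1‖ + ‖c₁ k - c₂ k + 1‖ := norm_sub_le _ _
          _ ≤ 2 * (ε * (1 + ‖c₁ k‖ + ‖c₂ k‖)) := by linarith
      linarith
    have hc2 : ‖c₂ k‖ ≤ ‖c₂ k - 1‖ + 1 := by
      calc ‖c₂ k‖ = ‖(c₂ k - 1) + 1‖ := by ring_nf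
        _ ≤ ‖c₂ k - 1‖ + ‖(1 : ℂ)‖ := norm_add_le _ _
        _ = ‖c₂ k - 1‖ + 1 := by norm_num
    have ha0 : 0 ≤ ‖c₁ k‖ := norm_nonneg _
    have hb0 : 0 ≤ ‖c₂ k - 1‖ := norm_nonneg _
    have hR : 1 + ‖c₁ k‖ + ‖c₂ k‖ ≤ 2 + ‖c₁ k‖ + ‖c₂ k - 1‖ := by linarith
    have hεR : ε * (1 + ‖c₁ k‖ + ‖c₂ k‖) ≤ ε * (2 + ‖c₁ k‖ + ‖c₂ k - 1‖) :=
      mul_le_mul_of_nonneg_left hR hε0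
    have hu' : ‖c₁ k‖ ≤ ε * (2 + ‖c₁ k‖ + ‖c₂ k - 1‖) := le_trans hu hεR
    have hv' : ‖c₂ k - 1‖ ≤ ε * (2 + ‖c₁ k‖ + ‖c₂ k - 1‖) := le_trans hv hεR
    have hq4 : ε * (2 + ‖c₁ k‖ + ‖c₂ k - 1‖) ≤ (1/4) * (2 + ‖c₁ k‖ + ‖c₂ k - 1‖) :=
      mul_le_mul_of_nonneg_right hε4 (by linarith)
    have hsum : ‖c₁ k‖ + ‖c₂ k - 1‖ ≤ 2 := by linarith
    have hfin : ε * (2 + ‖c₁ k‖ + ‖c₂ k - 1‖) ≤ ε * 4 :=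
      mul_le_mul_of_nonneg_left (by linarith) hε0
    have h4e : ε * (4 : ℝ) = 8 * Q / |k| := by
      rw [hεdef]; ring
    constructor
    · linarith
    · linarith
  have habs : Tendsto (fun k : ℝ => |k|) (cocompact ℝ) atTop := by
    exact (tendsto_norm_cocompact_atTop (E := ℝ)).congr (fun k => Real.norm_eq_abs k)
  have T : Tendsto (fun k : ℝ => 8 * Q / |k|) (cocompact ℝ) (nhds 0) :=
    tendsto_const_nhds.div_atTop habs
  have hev : ∀ᶠ k in cocompact ℝ, 8 * Q + 1 ≤ |k| := habs.eventually_ge_atTop _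
  constructor
  · have h2 : Tendsto (fun k => c₂ k - 1) (cocompact ℝ) (nhds 0) :=
      squeeze_zero_norm' (hev.mono fun k hk => (claim k hk).2) T
    have h3 := h2.add_const (1 : ℂ)
    simpa using h3
  · exact squeeze_zero_norm' (hev.mono fun k hk => (claim k hk).1) T
end
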